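/- (Lin's lower bound) The binary Bayes error is at least one quarter of the square of H(π) minus the Jensen-Shannon divergence: p_Bayes ≥ (1/4)·(H(π) − JS_π(p1,p2))². -/

import Mathlib

lemma two_log_le (u : ℝ) (hu : 1 ≤ u) : 2 * Real.log u ≤ u - u⁻¹ := by
  have hne : ∀ x ∈ Set.Ici (1:ℝ), x ≠ 0 := fun x hx => by
    have : (1:ℝ) ≤ x := hx; linarith
  have H : MonotoneOn (fun x : ℝ => x - x⁻¹ - 2 * Real.log x) (Set.Ici 1) := by
    apply monotoneOn_of_deriv_nonneg (convex_Ici 1)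
    · exact ((continuousOn_id.sub (continuousOn_id.inv₀ hne)).sub
        (continuousOn_const.mul (Real.continuousOn_log.mono (fun x hx => hne x hx))))
    · intro x hx
      rw [interior_Ici] at hx
      have hx0 : (0:ℝ) < x := lt_trans one_pos hx
      exact (((differentiableAt_id.sub (differentiableAt_inv hx0.ne')).sub
        ((Real.differentiableAt_log hx0.ne').const_mul 2)).differentiableWithinAt)
    · intro x hx
      rw [interior_Ici] at hx
      have hx0 : (0:ℝ) < x := lt_trans one_pos hx
      have hd : HasDerivAt (fun x : ℝ => x - x⁻¹ - 2 * Real.log x)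
          (1 - (-(x^2)⁻¹) - 2 * x⁻¹) x :=
        ((hasDerivAt_id x).sub (hasDerivAt_inv hx0.ne')).sub
          ((Real.hasDerivAt_log hx0.ne').const_mul 2)
      rw [hd.deriv]
      have h2 : 1 - (-(x ^ 2)⁻¹) - 2 * x⁻¹ = (1 - x⁻¹)^2 := by
        field_simp; ring
      rw [h2]; positivity
  have h := H (Set.self_mem_Ici) hu hu
  simp only [Real.log_one, inv_one] at h
  linarith


lemma log_le_sqrt' (y : ℝ) (hy : 1 ≤ y) :
    Real.log y ≤ Real.sqrt y - (Real.sqrt y)⁻¹ := by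
  have h0 : (0:ℝ) ≤ y := by linarith
  have h1 : 1 ≤ Real.sqrt y := Real.one_le_sqrt.2 hy
  have := two_log_le (Real.sqrt y) h1
  rw [Real.log_sqrt h0] at this
  linarith

lemma F_le_aux (a b : ℝ) (ha : 0 ≤ a) (hab : a ≤ b) :
    (a+b) * Real.logb 2 (a+b) - a * Real.logb 2 a - b * Real.logb 2 b
      ≤ 2 * Real.sqrt ((a+b) * a) := by
  rcases eq_or_lt_of_le ha with h0 | ha0
  · simp [← h0]
  · have hb0 : 0 < b := lt_of_lt_of_le ha0 hab
    have hm0 : 0 < a + b := by linarith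
    set sa := Real.sqrt a with hsa
    set sb := Real.sqrt b with hsb
    set sm := Real.sqrt (a+b) with hsm
    have hsa0 : 0 < sa := Real.sqrt_pos.2 ha0
    have hsb0 : 0 < sb := Real.sqrt_pos.2 hb0
    have hsm0 : 0 < sm := Real.sqrt_pos.2 hm0
    have hsa2 : sa^2 = a := Real.sq_sqrt ha
    have hsb2 : sb^2 = b := Real.sq_sqrt hb0.le
    have hsm2 : sm^2 = a + b := Real.sq_sqrt hm0.le
    have hl2 : (0:ℝ) < Real.log 2 := Real.log_pos one_lt_two
    have hA : a * Real.log ((a+b)/a) ≤ sa * b / sm := by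
      have h1 : 1 ≤ (a+b)/a := (one_le_div ha0).2 (by linarith)
      have h2 := log_le_sqrt' _ h1
      rw [Real.sqrt_div' _ ha] at h2
      have h4 : a * Real.log ((a+b)/a) ≤ a * (sm/sa - (sm/sa)⁻¹) :=
        mul_le_mul_of_nonneg_left h2 ha
      have h5 : a * (sm/sa - (sm/sa)⁻¹) = sa * b / sm := by
        rw [inv_div]
        field_simp
        linear_combination a*hsm2 + (-a - b)*hsa2
      linarith
    have hB : b * Real.log ((a+b)/b) ≤ sb * a / sm := by
      have h1 : 1 ≤ (a+b)/b := (one_le_div hb0).2 (by linarith)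
      have h2 := log_le_sqrt' _ h1
      rw [Real.sqrt_div' _ hb0.le] at h2
      have h4 : b * Real.log ((a+b)/b) ≤ b * (sm/sb - (sm/sb)⁻¹) :=
        mul_le_mul_of_nonneg_left h2 hb0.le
      have h5 : b * (sm/sb - (sm/sb)⁻¹) = sb * a / sm := by
        rw [inv_div]
        field_simp
        linear_combination b*hsm2 + (-b - a)*hsb2
      linarith
    set r := Real.sqrt 2 with hr
    have hr2 : r^2 = 2 := Real.sq_sqrt (by norm_num)
    have hr1 : 1 < r := by
      nlinarith [Real.sqrt_nonneg 2, hr2]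
    have hrlt : r < 1.415 := by
      nlinarith [Real.sqrt_nonneg 2, hr2]
    have hl2' : (0.6931471803:ℝ) < Real.log 2 := Real.log_two_gt_d9
    have hamgm : 2 * (sa*sb) ≤ (1 + r) * a + (r - 1) * b := by
      nlinarith [sq_nonneg (sa - (r-1)*sb), hsa2, hsb2, hr2, hr1,
        mul_pos hsa0 hsb0]
    have key : sa * b + sb * a ≤ 2 * Real.log 2 * (sa * (a+b)) := by
      have h6 : sb * a = sa * (sa * sb) := by rw [← hsa2]; ring
      have h7 : sa * (sa*sb) ≤ sa * (((1+r)*a + (r-1)*b)/2) :=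
        mul_le_mul_of_nonneg_left (by linarith) hsa0.le
      have h8 : sa*b + sa*(((1+r)*a + (r-1)*b)/2) = ((1+r)/2) * (sa*(a+b)) := by ring
      have h9 : ((1+r)/2) ≤ 2 * Real.log 2 := by linarith
      have h10 : 0 ≤ sa*(a+b) := by positivity
      calc sa * b + sb * a = sa*b + sa*(sa*sb) := by rw [h6]
        _ ≤ sa*b + sa*(((1+r)*a + (r-1)*b)/2) := by linarith
        _ = ((1+r)/2) * (sa*(a+b)) := h8
        _ ≤ 2 * Real.log 2 * (sa*(a+b)) := mul_le_mul_of_nonneg_right h9 h10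
    have hsum : sa * b / sm + sb * a / sm ≤ 2 * Real.log 2 * (sa * sm) := by
      rw [← add_div, div_le_iff₀ hsm0]
      calc sa * b + sb * a ≤ 2 * Real.log 2 * (sa * (a+b)) := key
        _ = 2 * Real.log 2 * (sa * sm) * sm := by rw [← hsm2]; ring
    have hexp : (a+b) * Real.logb 2 (a+b) - a * Real.logb 2 a - b * Real.logb 2 b
        = (a * Real.log ((a+b)/a) + b * Real.log ((a+b)/b)) / Real.log 2 := by
      simp only [Real.logb]
      rw [Real.log_div hm0.ne' ha0.ne', Real.log_div hm0.ne' hb0.ne']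
      field_simp
      ring
    rw [hexp, div_le_iff₀ hl2]
    have hfin : Real.sqrt ((a+b)*a) = sm * sa := Real.sqrt_mul hm0.le a
    rw [hfin]
    calc a * Real.log ((a+b)/a) + b * Real.log ((a+b)/b)
        ≤ sa * b / sm + sb * a / sm := by linarith
      _ ≤ 2 * Real.log 2 * (sa * sm) := hsum
      _ = 2 * (sm * sa) * Real.log 2 := by ring


lemma F_le (a b : ℝ) (ha : 0 ≤ a) (hb : 0 ≤ b) :
    (a+b) * Real.logb 2 (a+b) - a * Real.logb 2 a - b * Real.logb 2 b
      ≤ 2 * Real.sqrt ((a+b) * min a b) := by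
  rcases le_total a b with h | h
  · rw [min_eq_left h]; exact F_le_aux a b ha h
  · rw [min_eq_right h]
    have := F_le_aux b a hb h
    rw [add_comm b a] at this
    linarith
lemma F_nonneg (a b : ℝ) (ha : 0 ≤ a) (hb : 0 ≤ b) :
    0 ≤ (a+b) * Real.logb 2 (a+b) - a * Real.logb 2 a - b * Real.logb 2 b := by
  have h1 : a * Real.logb 2 a ≤ a * Real.logb 2 (a+b) := by
    rcases eq_or_lt_of_le ha with h0 | ha0
    · simp [← h0]
    · exact mul_le_mul_of_nonneg_left
        (Real.logb_le_logb_of_le (by norm_num) ha0 (by linarith)) ha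
  have h2 : b * Real.logb 2 b ≤ b * Real.logb 2 (a+b) := by
    rcases eq_or_lt_of_le hb with h0 | hb0
    · simp [← h0]
    · exact mul_le_mul_of_nonneg_left
        (Real.logb_le_logb_of_le (by norm_num) hb0 (by linarith)) hb
  nlinarith [h1, h2]

lemma mul_logb_mul (s t : ℝ) :
    (s*t) * Real.logb 2 (s*t) = s*t*Real.logb 2 s + s*t*Real.logb 2 t := by
  rcases eq_or_ne s 0 with rfl | hs
  · simp
  rcases eq_or_ne t 0 with rfl | ht
  · simp
  rw [Real.logb_mul hs ht]; ring

noncomputable def entropy2 {X : Type*} [Fintype X] (P : X → ℝ) : ℝ :=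
  -∑ x, P x * Real.logb 2 (P x)




theorem lin_lower_bound {X : Type*} [Fintype X] (p1 p2 : X → ℝ) (π1 π2 : ℝ)
    (hp1 : ∀ x, 0 ≤ p1 x) (hp1s : ∑ x, p1 x = 1)
    (hp2 : ∀ x, 0 ≤ p2 x) (hp2s : ∑ x, p2 x = 1)
    (hπ1 : 0 ≤ π1) (hπ2 : 0 ≤ π2) (hπ : π1 + π2 = 1) :
    (1 / 4) * ((-(π1 * Real.logb 2 π1) - π2 * Real.logb 2 π2)
        - (entropy2 (fun x => π1 * p1 x + π2 * p2 x)
            - π1 * entropy2 p1 - π2 * entropy2 p2)) ^ 2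
      ≤ ∑ x, min (π1 * p1 x) (π2 * p2 x) := by
  classical
  set a : X → ℝ := fun x => π1 * p1 x with ha_def
  set b : X → ℝ := fun x => π2 * p2 x with hb_def
  have ha : ∀ x, 0 ≤ a x := fun x => mul_nonneg hπ1 (hp1 x)
  have hb : ∀ x, 0 ≤ b x := fun x => mul_nonneg hπ2 (hp2 x)
  set F : X → ℝ := fun x =>
    (a x + b x) * Real.logb 2 (a x + b x)
      - a x * Real.logb 2 (a x) - b x * Real.logb 2 (b x) with hF_def
  -- identity
  have hA : ∑ x, a x * Real.logb 2 (a x)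
      = π1 * Real.logb 2 π1 + π1 * ∑ x, p1 x * Real.logb 2 (p1 x) := by
    have h1 : ∀ x ∈ Finset.univ, a x * Real.logb 2 (a x)
        = (π1 * Real.logb 2 π1) * p1 x + π1 * (p1 x * Real.logb 2 (p1 x)) := by
      intro x _
      have := mul_logb_mul π1 (p1 x)
      simp only [ha_def]
      rw [this]; ring
    rw [Finset.sum_congr rfl h1, Finset.sum_add_distrib, ← Finset.mul_sum,
      ← Finset.mul_sum, hp1s, mul_one]
  have hB : ∑ x, b x * Real.logb 2 (b x)
      = π2 * Real.logb 2 π2 + π2 * ∑ x, p2 x * Real.logb 2 (p2 x) := by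
    have h1 : ∀ x ∈ Finset.univ, b x * Real.logb 2 (b x)
        = (π2 * Real.logb 2 π2) * p2 x + π2 * (p2 x * Real.logb 2 (p2 x)) := by
      intro x _
      have := mul_logb_mul π2 (p2 x)
      simp only [hb_def]
      rw [this]; ring
    rw [Finset.sum_congr rfl h1, Finset.sum_add_distrib, ← Finset.mul_sum,
      ← Finset.mul_sum, hp2s, mul_one]
  have hE : (-(π1 * Real.logb 2 π1) - π2 * Real.logb 2 π2)
        - (entropy2 (fun x => π1 * p1 x + π2 * p2 x)
            - π1 * entropy2 p1 - π2 * entropy2 p2) = ∑ x, F x := by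
    simp only [entropy2, hF_def]
    rw [Finset.sum_sub_distrib, Finset.sum_sub_distrib, hA, hB]
    ring
  -- bounds
  have hm1 : ∑ x, (a x + b x) = 1 := by
    rw [Finset.sum_add_distrib]
    simp only [ha_def, hb_def]
    rw [← Finset.mul_sum, ← Finset.mul_sum, hp1s, hp2s]
    simpa using hπ
  have hFle : ∀ x, F x ≤ 2 * Real.sqrt ((a x + b x) * min (a x) (b x)) :=
    fun x => F_le (a x) (b x) (ha x) (hb x)
  have hFnn : ∀ x, 0 ≤ F x := fun x => F_nonneg (a x) (b x) (ha x) (hb x)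
  have hminnn : ∀ x, 0 ≤ min (a x) (b x) := fun x => le_min (ha x) (hb x)
  -- Cauchy-Schwarz
  have hCS : (∑ x, Real.sqrt ((a x + b x) * min (a x) (b x)))^2
      ≤ ∑ x, min (a x) (b x) := by
    have h1 : ∀ x ∈ Finset.univ, Real.sqrt ((a x + b x) * min (a x) (b x))
        = Real.sqrt (a x + b x) * Real.sqrt (min (a x) (b x)) := fun x _ =>
      Real.sqrt_mul (by have := ha x; have := hb x; linarith) _
    rw [Finset.sum_congr rfl h1]
    have h2 := Finset.sum_mul_sq_le_sq_mul_sq Finset.univ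
      (fun x => Real.sqrt (a x + b x)) (fun x => Real.sqrt (min (a x) (b x)))
    have h3 : ∀ x ∈ Finset.univ, Real.sqrt (a x + b x)^2 = a x + b x := fun x _ =>
      Real.sq_sqrt (by have := ha x; have := hb x; linarith)
    have h4 : ∀ x ∈ Finset.univ, Real.sqrt (min (a x) (b x))^2 = min (a x) (b x) :=
      fun x _ => Real.sq_sqrt (hminnn x)
    rw [Finset.sum_congr rfl h3, Finset.sum_congr rfl h4, hm1, one_mul] at h2
    exact h2
  have hsumle : ∑ x, F x ≤ 2 * ∑ x, Real.sqrt ((a x + b x) * min (a x) (b x)) := by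
    rw [Finset.mul_sum]
    exact Finset.sum_le_sum fun x _ => hFle x
  have hsumnn : 0 ≤ ∑ x, F x := Finset.sum_nonneg fun x _ => hFnn x
  have hsq : (∑ x, F x)^2 ≤ 4 * ∑ x, min (a x) (b x) := by
    have h5 : (∑ x, F x)^2 ≤ (2 * ∑ x, Real.sqrt ((a x + b x) * min (a x) (b x)))^2 :=
      pow_le_pow_left₀ hsumnn hsumle 2
    calc (∑ x, F x)^2 ≤ (2 * ∑ x, Real.sqrt ((a x + b x) * min (a x) (b x)))^2 := h5
      _ = 4 * (∑ x, Real.sqrt ((a x + b x) * min (a x) (b x)))^2 := by ring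
      _ ≤ 4 * ∑ x, min (a x) (b x) := by linarith [hCS]
  rw [hE]
  have : ∑ x, min (π1 * p1 x) (π2 * p2 x) = ∑ x, min (a x) (b x) := rfl
  rw [this]
  linarith [hsq]
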